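/- For p ≥ q ≥ 1, the second largest signless Laplacian eigenvalue of the double star G(p,2,q) lies in [q+1, q+2), and equals q+1 if and only if p = q. -/

import Mathlib

open Matrix SimpleGraph Polynomial

/-- The signless Laplacian matrix Q(G) = D(G) + A(G). -/
noncomputable def signlessLaplacian {V : Type*} [Fintype V] [DecidableEq V]
    (G : SimpleGraph V) [DecidableRel G.Adj] : Matrix V V ℝ :=
  Matrix.diagonal (fun v => (G.degree v : ℝ)) + G.adjMatrix ℝ

/-- Eigenvalues (roots of the characteristic polynomial, with multiplicity),
sorted in non-increasing order. -/
noncomputable def eigsDesc {V : Type*} [Fintype V] [DecidableEq V] (M : Matrix V V ℝ) : List ℝ :=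
  (M.charpoly.roots.sort (· ≤ ·)).reverse

/-- Vertex degrees sorted in non-increasing order. -/
noncomputable def degsDesc {V : Type*} [Fintype V] [DecidableEq V]
    (G : SimpleGraph V) [DecidableRel G.Adj] : List ℕ :=
  ((Finset.univ.val.map fun v => G.degree v).sort (· ≤ ·)).reverse

/-- The double star G(p,2,q): vertices 0 and 1 are adjacent centers; vertices
2,…,p+1 are pendants attached to 0, and vertices p+2,…,p+q+1 are pendants attached to 1. -/
def doubleStar (p q : ℕ) : SimpleGraph (Fin (p + q + 2)) :=
  SimpleGraph.fromRel (fun a b =>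
    ((a : ℕ) = 0 ∧ (b : ℕ) = 1) ∨
    ((a : ℕ) = 0 ∧ 2 ≤ (b : ℕ) ∧ (b : ℕ) < p + 2) ∨
    ((a : ℕ) = 1 ∧ p + 2 ≤ (b : ℕ)))

instance (p q : ℕ) : DecidableRel (doubleStar p q).Adj := fun a b => by
  unfold doubleStar; exact inferInstanceAs (Decidable (_ ∧ _))

def eequiv (p q : ℕ) : Fin 2 ⊕ (Fin p ⊕ Fin q) ≃ Fin (p + q + 2) where
  toFun x := match x with
    | .inl i => ⟨i, by omega⟩
    | .inr (.inl j) => ⟨2 + j, by omega⟩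
    | .inr (.inr k) => ⟨2 + p + k, by omega⟩
  invFun v :=
    if h : (v : ℕ) < 2 then .inl ⟨v, h⟩
    else if h2 : (v : ℕ) < 2 + p then .inr (.inl ⟨(v : ℕ) - 2, by omega⟩)
    else .inr (.inr ⟨(v : ℕ) - 2 - p, by omega⟩)
  left_inv x := by
    rcases x with i | j | k
    · simp; intro h; omega
    · have : ¬ ((2 + (j:ℕ)) < 2) := by omega
      simp [this, j.isLt]
    · have h1 : ¬ ((2 + p + (k:ℕ)) < 2) := by omega
      have h2 : ¬ ((2 + p + (k:ℕ)) < 2 + p) := by omega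
      simp [h1, h2, Fin.ext_iff]; omega
  right_inv v := by
    by_cases h : (v : ℕ) < 2
    · simp [h]
    · by_cases h2 : (v : ℕ) < 2 + p
      · simp [h, h2, Fin.ext_iff]; omega
      · simp [h, h2, Fin.ext_iff]; omega

example (p q : ℕ) (j : Fin p) : (doubleStar p q).Adj (eequiv p q (.inl 0)) (eequiv p q (.inr (.inl j))) := by
  simp [doubleStar, SimpleGraph.fromRel_adj, eequiv, Fin.ext_iff, -Fin.val_eq_zero_iff]
  omega

@[simp] lemma eequiv_inl_val (p q : ℕ) (i : Fin 2) : ((eequiv p q (.inl i)) : ℕ) = i := rfl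
@[simp] lemma eequiv_inrl_val (p q : ℕ) (j : Fin p) : ((eequiv p q (.inr (.inl j))) : ℕ) = 2 + j := rfl
@[simp] lemma eequiv_inrr_val (p q : ℕ) (k : Fin q) : ((eequiv p q (.inr (.inr k))) : ℕ) = 2 + p + k := rfl

lemma adj_ds (p q : ℕ) (a b : Fin (p+q+2)) : (doubleStar p q).Adj a b ↔
    (a:ℕ) ≠ (b:ℕ) ∧ (((((a:ℕ)=0 ∧ (b:ℕ)=1) ∨ ((a:ℕ)=0 ∧ 2 ≤ (b:ℕ) ∧ (b:ℕ) < p+2) ∨ ((a:ℕ)=1 ∧ p+2 ≤ (b:ℕ)))) ∨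
     ((((b:ℕ)=0 ∧ (a:ℕ)=1) ∨ ((b:ℕ)=0 ∧ 2 ≤ (a:ℕ) ∧ (a:ℕ) < p+2) ∨ ((b:ℕ)=1 ∧ p+2 ≤ (a:ℕ))))) := by
  simp only [doubleStar, SimpleGraph.fromRel_adj, Fin.ext_iff, ne_eq]

lemma deg_apply (p q : ℕ) (v : Fin (p+q+2)) :
    (doubleStar p q).degree v =
      (∑ i : Fin 2, if (doubleStar p q).Adj v (eequiv p q (.inl i)) then 1 else 0)
      + ((∑ j : Fin p, if (doubleStar p q).Adj v (eequiv p q (.inr (.inl j))) then 1 else 0)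
      + ∑ k : Fin q, if (doubleStar p q).Adj v (eequiv p q (.inr (.inr k))) then 1 else 0) := by
  rw [SimpleGraph.degree, SimpleGraph.neighborFinset_eq_filter, Finset.card_filter]
  rw [← Fintype.sum_equiv (eequiv p q) _ (fun y => if (doubleStar p q).Adj v y then 1 else 0) (fun x => rfl)]
  rw [Fintype.sum_sum_type, Fintype.sum_sum_type]

lemma deg0 (p q : ℕ) : (doubleStar p q).degree (eequiv p q (.inl 0)) = p + 1 := by
  rw [deg_apply, Fin.sum_univ_two]
  have h0 : ¬ (doubleStar p q).Adj (eequiv p q (.inl 0)) (eequiv p q (.inl 0)) := by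
    rw [adj_ds]; simp
  have h1 : (doubleStar p q).Adj (eequiv p q (.inl 0)) (eequiv p q (.inl 1)) := by
    rw [adj_ds]; simp
  rw [if_neg h0, if_pos h1]
  have h2 : ∀ j : Fin p, (doubleStar p q).Adj (eequiv p q (.inl 0)) (eequiv p q (.inr (.inl j))) := by
    intro j; rw [adj_ds]; simp; omega
  have h3 : ∀ k : Fin q, ¬ (doubleStar p q).Adj (eequiv p q (.inl 0)) (eequiv p q (.inr (.inr k))) := by
    intro k; rw [adj_ds]; simp; omega
  simp [h2, h3]; omega

lemma deg1 (p q : ℕ) : (doubleStar p q).degree (eequiv p q (.inl 1)) = q + 1 := by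
  rw [deg_apply, Fin.sum_univ_two]
  have h0 : (doubleStar p q).Adj (eequiv p q (.inl 1)) (eequiv p q (.inl 0)) := by
    rw [adj_ds]; simp
  have h1 : ¬ (doubleStar p q).Adj (eequiv p q (.inl 1)) (eequiv p q (.inl 1)) := by
    rw [adj_ds]; simp
  rw [if_neg h1, if_pos h0]
  have h2 : ∀ j : Fin p, ¬ (doubleStar p q).Adj (eequiv p q (.inl 1)) (eequiv p q (.inr (.inl j))) := by
    intro j; rw [adj_ds]; simp; omega
  have h3 : ∀ k : Fin q, (doubleStar p q).Adj (eequiv p q (.inl 1)) (eequiv p q (.inr (.inr k))) := by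
    intro k; rw [adj_ds]; simp; omega
  simp [h2, h3]; omega

lemma degpend0 (p q : ℕ) (j : Fin p) : (doubleStar p q).degree (eequiv p q (.inr (.inl j))) = 1 := by
  rw [deg_apply, Fin.sum_univ_two]
  have h0 : (doubleStar p q).Adj (eequiv p q (.inr (.inl j))) (eequiv p q (.inl 0)) := by
    rw [adj_ds]; simp; omega
  have h1 : ¬ (doubleStar p q).Adj (eequiv p q (.inr (.inl j))) (eequiv p q (.inl 1)) := by
    rw [adj_ds]; simp; omega
  rw [if_neg h1, if_pos h0]
  have h2 : ∀ j' : Fin p, ¬ (doubleStar p q).Adj (eequiv p q (.inr (.inl j))) (eequiv p q (.inr (.inl j'))) := by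
    intro j'; rw [adj_ds]; simp; omega
  have h3 : ∀ k : Fin q, ¬ (doubleStar p q).Adj (eequiv p q (.inr (.inl j))) (eequiv p q (.inr (.inr k))) := by
    intro k; rw [adj_ds]; simp; omega
  simp [h2, h3]

lemma degpend1 (p q : ℕ) (k : Fin q) : (doubleStar p q).degree (eequiv p q (.inr (.inr k))) = 1 := by
  rw [deg_apply, Fin.sum_univ_two]
  have h0 : ¬ (doubleStar p q).Adj (eequiv p q (.inr (.inr k))) (eequiv p q (.inl 0)) := by
    rw [adj_ds]; simp; omega
  have h1 : (doubleStar p q).Adj (eequiv p q (.inr (.inr k))) (eequiv p q (.inl 1)) := by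
    rw [adj_ds]; simp; omega
  rw [if_neg h0, if_pos h1]
  have h2 : ∀ j' : Fin p, ¬ (doubleStar p q).Adj (eequiv p q (.inr (.inr k))) (eequiv p q (.inr (.inl j'))) := by
    intro j'; rw [adj_ds]; simp; omega
  have h3 : ∀ k' : Fin q, ¬ (doubleStar p q).Adj (eequiv p q (.inr (.inr k))) (eequiv p q (.inr (.inr k'))) := by
    intro k'; rw [adj_ds]; simp; omega
  simp [h2, h3]


lemma sL_apply {V : Type*} [Fintype V] [DecidableEq V]
    (G : SimpleGraph V) [DecidableRel G.Adj] (a b : V) :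
    signlessLaplacian G a b
      = (if a = b then (G.degree a : ℝ) else 0) + (if G.Adj a b then 1 else 0) := by
  simp [signlessLaplacian, Matrix.diagonal_apply, Matrix.add_apply]

noncomputable def Bblk (p q : ℕ) : Matrix (Fin 2) (Fin p ⊕ Fin q) ℝ :=
  Matrix.of fun i j => if i = 0 then (Sum.elim (fun _ => (1:ℝ)) (fun _ => 0) j)
    else (Sum.elim (fun _ => (0:ℝ)) (fun _ => 1) j)

noncomputable def Qblk (p q : ℕ) : Matrix (Fin 2 ⊕ (Fin p ⊕ Fin q)) (Fin 2 ⊕ (Fin p ⊕ Fin q)) ℝ :=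
  Matrix.fromBlocks !![(p:ℝ)+1, 1; 1, (q:ℝ)+1] (Bblk p q) (Bblk p q)ᵀ 1

lemma reindex_Q (p q : ℕ) :
    Matrix.reindex (eequiv p q).symm (eequiv p q).symm (signlessLaplacian (doubleStar p q))
      = Qblk p q := by
  ext x y
  have einj := (eequiv p q).injective
  rcases x with i | j | k <;> rcases y with i' | j' | k'
  · fin_cases i <;> fin_cases i' <;>
      simp [sL_apply, Qblk, Matrix.fromBlocks, einj.eq_iff, deg0, deg1, adj_ds]
  · fin_cases i <;>
      · simp [sL_apply, Qblk, Matrix.fromBlocks, einj.eq_iff, adj_ds, Bblk]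
        omega
  · fin_cases i <;>
      · simp [sL_apply, Qblk, Matrix.fromBlocks, einj.eq_iff, adj_ds, Bblk]
        omega
  · fin_cases i' <;>
      · simp [sL_apply, Qblk, Matrix.fromBlocks, einj.eq_iff, adj_ds, Bblk]
        omega
  · by_cases h : j = j'
    · subst h
      simp [sL_apply, Qblk, Matrix.fromBlocks, einj.eq_iff, degpend0, adj_ds, Matrix.one_apply]
    · simp [sL_apply, Qblk, Matrix.fromBlocks, einj.eq_iff, h, adj_ds, Matrix.one_apply]
      omega
  · simp [sL_apply, Qblk, Matrix.fromBlocks, einj.eq_iff, adj_ds, Matrix.one_apply]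
    omega
  · fin_cases i' <;>
      · simp [sL_apply, Qblk, Matrix.fromBlocks, einj.eq_iff, adj_ds, Bblk]
        omega
  · simp [sL_apply, Qblk, Matrix.fromBlocks, einj.eq_iff, adj_ds, Matrix.one_apply]
    omega
  · by_cases h : k = k'
    · subst h
      simp [sL_apply, Qblk, Matrix.fromBlocks, einj.eq_iff, degpend1, adj_ds, Matrix.one_apply]
    · simp [sL_apply, Qblk, Matrix.fromBlocks, einj.eq_iff, h, adj_ds, Matrix.one_apply]
      omega

noncomputable def cubic (p q : ℕ) : ℝ[X] :=
  X^3 - Polynomial.C ((p:ℝ)+q+4) * X^2 + Polynomial.C ((p:ℝ)*q+2*p+2*q+5) * X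
    - Polynomial.C ((p:ℝ)+q+2)

lemma charpoly_Qblk (p q : ℕ) (hpq2 : 2 ≤ p + q) :
    (Qblk p q).charpoly = (X - Polynomial.C (1:ℝ))^(p+q-2) * (X * cubic p q) := by
  classical
  set J := (Bblk p q).map (Polynomial.C) with hJ
  set E : Matrix (Fin 2 ⊕ (Fin p ⊕ Fin q)) (Fin 2 ⊕ (Fin p ⊕ Fin q)) ℝ[X] :=
    Matrix.fromBlocks ((X - Polynomial.C (1:ℝ)) • (1 : Matrix (Fin 2) (Fin 2) ℝ[X])) J 0 1 with hE
  have hdetE : E.det = (X - Polynomial.C (1:ℝ))^2 := by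
    rw [hE, Matrix.det_fromBlocks_zero₂₁, Matrix.det_one, mul_one, Matrix.det_smul,
      Matrix.det_one, mul_one, Fintype.card_fin]
  have hch1 : Matrix.charmatrix (1 : Matrix (Fin p ⊕ Fin q) (Fin p ⊕ Fin q) ℝ)
      = (X - Polynomial.C (1:ℝ)) • 1 := by
    ext i j
    by_cases h : i = j
    · subst h; simp
    · simp [Matrix.charmatrix_apply_ne _ _ _ h, Matrix.one_apply, h]
  have hJBt : J * (((Bblk p q)ᵀ).map Polynomial.C)
      = !![Polynomial.C (p:ℝ), 0; 0, Polynomial.C (q:ℝ)] := by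
    ext i i'
    fin_cases i <;> fin_cases i' <;>
      simp [hJ, Matrix.mul_apply, Fintype.sum_sum_type, Bblk]
  set TL : Matrix (Fin 2) (Fin 2) ℝ[X] :=
    !![(X - Polynomial.C (1:ℝ)) * (X - Polynomial.C ((p:ℝ)+1)) - Polynomial.C (p:ℝ), -(X - Polynomial.C (1:ℝ));
       -(X - Polynomial.C (1:ℝ)), (X - Polynomial.C (1:ℝ)) * (X - Polynomial.C ((q:ℝ)+1)) - Polynomial.C (q:ℝ)] with hTLdef
  have hCM : Matrix.charmatrix (Qblk p q)
      = Matrix.fromBlocks (Matrix.charmatrix !![(p:ℝ)+1, 1; 1, (q:ℝ)+1]) (-J)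
          (-(((Bblk p q)ᵀ).map Polynomial.C)) ((X - Polynomial.C (1:ℝ)) • 1) := by
    rw [Qblk, Matrix.charmatrix_fromBlocks, hch1]
  have hECM : E * Matrix.charmatrix (Qblk p q)
      = Matrix.fromBlocks TL 0 (-(((Bblk p q)ᵀ).map Polynomial.C)) ((X - Polynomial.C (1:ℝ)) • 1) := by
    rw [hCM, hE, Matrix.fromBlocks_multiply]
    rw [Matrix.fromBlocks_inj]
    refine ⟨?_, ?_, ?_, ?_⟩
    · rw [Matrix.smul_mul, Matrix.one_mul, Matrix.mul_neg, hJBt]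
      ext i i'
      fin_cases i <;> fin_cases i' <;>
        simp [Matrix.charmatrix_apply_eq, Matrix.charmatrix_apply_ne, hTLdef] <;> try ring
    · simp [Matrix.smul_mul, Matrix.mul_smul]
    · rw [Matrix.zero_mul, Matrix.one_mul, zero_add]
    · rw [Matrix.zero_mul, Matrix.one_mul, zero_add]
  have hdetTL : TL.det = X * cubic p q := by
    rw [hTLdef, Matrix.det_fin_two_of, cubic]
    simp only [Polynomial.C_add, Polynomial.C_mul, Polynomial.C_1, _root_.map_ofNat]
    ring
  have key : (X - Polynomial.C (1:ℝ))^2 * (Qblk p q).charpoly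
      = (X - Polynomial.C (1:ℝ))^2 * ((X - Polynomial.C (1:ℝ))^(p+q-2) * (X * cubic p q)) := by
    have h1 : E.det * (Matrix.charmatrix (Qblk p q)).det
        = TL.det * ((X - Polynomial.C (1:ℝ))^(p+q)) := by
      rw [← Matrix.det_mul, hECM, Matrix.det_fromBlocks_zero₁₂, Matrix.det_smul,
        Matrix.det_one, mul_one, Fintype.card_sum, Fintype.card_fin, Fintype.card_fin]
    rw [hdetE, hdetTL] at h1
    rw [Matrix.charpoly, h1]
    have hpow : (X - Polynomial.C (1:ℝ))^(p+q) = (X - Polynomial.C (1:ℝ))^2 * (X - Polynomial.C (1:ℝ))^(p+q-2) := by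
      rw [← pow_add]; congr 1; omega
    rw [hpow]; ring
  have hne : (X - Polynomial.C (1:ℝ))^2 ≠ 0 := pow_ne_zero _ (Polynomial.X_sub_C_ne_zero 1)
  exact mul_left_cancel₀ hne key

lemma cubic_monic (p q : ℕ) : (cubic p q).Monic := by
  unfold cubic; monicity!

lemma cubic_natDegree (p q : ℕ) : (cubic p q).natDegree = 3 := by
  unfold cubic; compute_degree!

set_option maxHeartbeats 1000000 in
lemma cubic_facts (p q : ℕ) (hq : 1 ≤ q) (hpq : q ≤ p) :
    ∃ r1 r2 r3 : ℝ,
      (cubic p q) = (X - Polynomial.C r1) * (X - Polynomial.C r2) * (X - Polynomial.C r3) ∧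
      (cubic p q).roots = {r1, r2, r3} ∧
      0 < r1 ∧ r1 < 1 ∧ 1 < r2 ∧ r2 < (q:ℝ)+2 ∧ (q:ℝ)+2 < r3 ∧
      ((q:ℝ)+1 ≤ r2) ∧ (r2 = (q:ℝ)+1 ↔ p = q) := by
  have hq1 : (1:ℝ) ≤ (q:ℝ) := by exact_mod_cast hq
  have hpq1 : (q:ℝ) ≤ (p:ℝ) := by exact_mod_cast hpq
  have hp1 : (1:ℝ) ≤ (p:ℝ) := le_trans hq1 hpq1
  have hcont : Continuous fun x : ℝ => Polynomial.eval x (cubic p q) :=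
    (cubic p q).continuous
  have e0 : Polynomial.eval 0 (cubic p q) = -((p:ℝ)+q+2) := by simp [cubic]
  have e1 : Polynomial.eval 1 (cubic p q) = (p:ℝ)*q := by simp [cubic]; ring
  have eq2 : Polynomial.eval ((q:ℝ)+2) (cubic p q) = -(p:ℝ) := by simp [cubic]; ring
  have eq1 : Polynomial.eval ((q:ℝ)+1) (cubic p q) = (q:ℝ)*((p:ℝ)-(q:ℝ)) := by
    simp [cubic]; ring
  have ebig : Polynomial.eval ((p:ℝ)+q+4) (cubic p q)
      = ((p:ℝ)*q+2*p+2*q+5)*((p:ℝ)+q+4) - ((p:ℝ)+q+2) := by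
    simp [cubic]; ring
  -- r1 ∈ (0,1)
  have mem1 : (0:ℝ) ∈ Set.Ioo (Polynomial.eval 0 (cubic p q)) (Polynomial.eval 1 (cubic p q)) := by
    rw [Set.mem_Ioo, e0, e1]; constructor <;> nlinarith
  obtain ⟨r1, hr1mem, hr1⟩ :=
    intermediate_value_Ioo (by norm_num : (0:ℝ) ≤ 1) hcont.continuousOn mem1
  -- r2 ∈ (1, q+2)
  have mem2 : (0:ℝ) ∈ Set.Ioo (Polynomial.eval ((q:ℝ)+2) (cubic p q)) (Polynomial.eval 1 (cubic p q)) := by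
    rw [Set.mem_Ioo, e1, eq2]; constructor <;> nlinarith
  obtain ⟨r2, hr2mem, hr2⟩ :=
    intermediate_value_Ioo' (by nlinarith : (1:ℝ) ≤ (q:ℝ)+2) hcont.continuousOn mem2
  -- r3 ∈ (q+2, p+q+4)
  have mem3 : (0:ℝ) ∈ Set.Ioo (Polynomial.eval ((q:ℝ)+2) (cubic p q)) (Polynomial.eval ((p:ℝ)+q+4) (cubic p q)) := by
    rw [Set.mem_Ioo, eq2, ebig]
    refine ⟨by nlinarith, ?_⟩
    nlinarith [mul_nonneg (by positivity : (0:ℝ) ≤ (p:ℝ)*q+2*p+2*q)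
      (by positivity : (0:ℝ) ≤ (p:ℝ)+q+4)]
  obtain ⟨r3, hr3mem, hr3⟩ :=
    intermediate_value_Ioo (by nlinarith : (q:ℝ)+2 ≤ (p:ℝ)+q+4) hcont.continuousOn mem3
  obtain ⟨hr1a, hr1b⟩ := hr1mem
  obtain ⟨hr2a, hr2b⟩ := hr2mem
  obtain ⟨hr3a, hr3b⟩ := hr3mem
  have h12 : r1 ≠ r2 := ne_of_lt (hr1b.trans hr2a)
  have h13 : r1 ≠ r3 := ne_of_lt (by linarith)
  have h23 : r2 ≠ r3 := ne_of_lt (by linarith)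
  have hne : cubic p q ≠ 0 := (cubic_monic p q).ne_zero
  -- divisibility
  have d1 : (X - Polynomial.C r1) ∣ cubic p q := Polynomial.dvd_iff_isRoot.mpr hr1
  have d2 : (X - Polynomial.C r2) ∣ cubic p q := Polynomial.dvd_iff_isRoot.mpr hr2
  have d3 : (X - Polynomial.C r3) ∣ cubic p q := Polynomial.dvd_iff_isRoot.mpr hr3
  have cop12 : IsCoprime (X - Polynomial.C r1) (X - Polynomial.C r2) :=
    Polynomial.isCoprime_X_sub_C_of_isUnit_sub (sub_ne_zero_of_ne h12).isUnit
  have cop13 : IsCoprime (X - Polynomial.C r1) (X - Polynomial.C r3) :=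
    Polynomial.isCoprime_X_sub_C_of_isUnit_sub (sub_ne_zero_of_ne h13).isUnit
  have cop23 : IsCoprime (X - Polynomial.C r2) (X - Polynomial.C r3) :=
    Polynomial.isCoprime_X_sub_C_of_isUnit_sub (sub_ne_zero_of_ne h23).isUnit
  have ddvd : (X - Polynomial.C r1) * (X - Polynomial.C r2) * (X - Polynomial.C r3) ∣ cubic p q :=
    (cop13.mul_left cop23).mul_dvd (cop12.mul_dvd d1 d2) d3
  set d : ℝ[X] := (X - Polynomial.C r1) * (X - Polynomial.C r2) * (X - Polynomial.C r3) with hd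
  have hdmonic : d.Monic :=
    ((monic_X_sub_C r1).mul (monic_X_sub_C r2)).mul (monic_X_sub_C r3)
  have hddeg : d.natDegree = 3 := by
    rw [hd, Polynomial.natDegree_mul (mul_ne_zero (Polynomial.X_sub_C_ne_zero r1)
        (Polynomial.X_sub_C_ne_zero r2)) (Polynomial.X_sub_C_ne_zero r3),
      Polynomial.natDegree_mul (Polynomial.X_sub_C_ne_zero r1) (Polynomial.X_sub_C_ne_zero r2),
      Polynomial.natDegree_X_sub_C, Polynomial.natDegree_X_sub_C, Polynomial.natDegree_X_sub_C]
  have hfact : cubic p q = d := by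
    obtain ⟨c, hc⟩ := ddvd
    have hc0 : c ≠ 0 := by rintro rfl; simp at hc; exact hne hc
    have hdegc : c.natDegree = 0 := by
      have := Polynomial.natDegree_mul hdmonic.ne_zero hc0
      rw [← hc, cubic_natDegree, hddeg] at this
      omega
    have hlc : c.leadingCoeff = 1 := by
      have := congrArg Polynomial.leadingCoeff hc
      rw [(cubic_monic p q).leadingCoeff, Polynomial.leadingCoeff_mul, hdmonic.leadingCoeff,
        one_mul] at this
      exact this.symm
    have : c = 1 := by
      rw [Polynomial.eq_C_of_natDegree_eq_zero hdegc] at hlc ⊢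
      rw [Polynomial.leadingCoeff_C] at hlc
      rw [hlc]; simp
    rw [hc, this, mul_one]
  have hroots : (cubic p q).roots = {r1, r2, r3} := by
    rw [hfact, hd]
    rw [Polynomial.roots_mul (by rw [← hd, ← hfact]; exact hne),
      Polynomial.roots_mul (mul_ne_zero (Polynomial.X_sub_C_ne_zero r1) (Polynomial.X_sub_C_ne_zero r2)),
      Polynomial.roots_X_sub_C, Polynomial.roots_X_sub_C, Polynomial.roots_X_sub_C]
    rfl
  -- evaluate at q+1 through factorization
  have heval : ((q:ℝ)+1-r1) * ((q:ℝ)+1-r2) * ((q:ℝ)+1-r3) = (q:ℝ)*((p:ℝ)-(q:ℝ)) := by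
    rw [← eq1, hfact, hd]; simp
  have hfac1 : (0:ℝ) < (q:ℝ)+1-r1 := by linarith
  have hfac3 : (q:ℝ)+1-r3 < 0 := by linarith
  have hr2ge : (q:ℝ)+1 ≤ r2 := by
    by_contra hcon
    push_neg at hcon
    have h2pos : (0:ℝ) < (q:ℝ)+1-r2 := by linarith
    nlinarith [mul_pos hfac1 h2pos]
  refine ⟨r1, r2, r3, by rw [hfact, hd], hroots, hr1a, hr1b, hr2a, hr2b, hr3a, hr2ge, ?_⟩
  constructor
  · intro h
    have : (q:ℝ)*((p:ℝ)-(q:ℝ)) = 0 := by rw [← heval, h]; ring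
    have : (p:ℝ) = (q:ℝ) := by
      rcases mul_eq_zero.mp this with h' | h'
      · nlinarith
      · linarith
    exact_mod_cast this
  · intro h
    have : ((q:ℝ)+1-r1) * ((q:ℝ)+1-r2) * ((q:ℝ)+1-r3) = 0 := by rw [heval, h]; ring
    rcases mul_eq_zero.mp this with h' | h'
    · rcases mul_eq_zero.mp h' with h'' | h''
      · nlinarith
      · linarith
    · nlinarith


theorem stmt_13 (p q : ℕ) (hq : 1 ≤ q) (hpq : q ≤ p)
    (γ₂ : ℝ) (hγ : γ₂ = (eigsDesc (signlessLaplacian (doubleStar p q))).getD 1 0) :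
    ((q : ℝ) + 1 ≤ γ₂ ∧ γ₂ < (q : ℝ) + 2) ∧ (γ₂ = (q : ℝ) + 1 ↔ p = q) := by
  have h2 : 2 ≤ p + q := by omega
  obtain ⟨r1, r2, r3, hfact, hroots, hr1a, hr1b, hr2a, hr2b, hr3a, hr2ge, hiff⟩ :=
    cubic_facts p q hq hpq
  have hq1 : (1:ℝ) ≤ (q:ℝ) := by exact_mod_cast hq
  have hcp : (signlessLaplacian (doubleStar p q)).charpoly
      = (X - Polynomial.C (1:ℝ))^(p+q-2) * (X * cubic p q) := by
    have h := Matrix.charpoly_reindex ((eequiv p q).symm) (signlessLaplacian (doubleStar p q))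
    rw [← h, reindex_Q, charpoly_Qblk p q h2]
  have hXc : (X : ℝ[X]) * cubic p q ≠ 0 :=
    mul_ne_zero Polynomial.X_ne_zero (cubic_monic p q).ne_zero
  have hrootsall : (signlessLaplacian (doubleStar p q)).charpoly.roots
      = Multiset.replicate (p+q-2) (1:ℝ) + ({0} + {r1, r2, r3}) := by
    rw [hcp, Polynomial.roots_mul (mul_ne_zero (pow_ne_zero _ (Polynomial.X_sub_C_ne_zero 1)) hXc),
      Polynomial.roots_pow, Polynomial.roots_X_sub_C,
      Polynomial.roots_mul hXc, Polynomial.roots_X, hroots, Multiset.nsmul_singleton]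
  set L : List ℝ := [0, r1] ++ (List.replicate (p+q-2) 1 ++ [r2, r3]) with hLdef
  have hL : (L : Multiset ℝ) = Multiset.replicate (p+q-2) (1:ℝ) + ({0} + {r1, r2, r3}) := by
    rw [hLdef]
    rw [show ((([0, r1] ++ (List.replicate (p+q-2) 1 ++ [r2, r3])) : List ℝ) : Multiset ℝ)
        = ([0, r1] : List ℝ) + ((List.replicate (p+q-2) (1:ℝ) : List ℝ) + ([r2, r3] : List ℝ))
      from by rw [Multiset.coe_add, Multiset.coe_add]]
    rw [Multiset.coe_replicate]
    show (0 ::ₘ r1 ::ₘ 0) + (Multiset.replicate (p+q-2) (1:ℝ) + (r2 ::ₘ r3 ::ₘ 0))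
      = Multiset.replicate (p+q-2) (1:ℝ) + (0 ::ₘ (r1 ::ₘ r2 ::ₘ r3 ::ₘ 0))
    simp only [← Multiset.singleton_add]
    abel
  have hrep : ∀ m : ℕ, List.Pairwise (· ≤ ·) (List.replicate m (1:ℝ)) := by
    intro m
    induction m with
    | zero => simp
    | succ k ih =>
      rw [List.replicate_succ, List.pairwise_cons]
      exact ⟨fun b hb => le_of_eq (List.eq_of_mem_replicate hb).symm, ih⟩
  have htail : List.Pairwise (· ≤ ·) ((List.replicate (p+q-2) (1:ℝ)) ++ [r2, r3]) := by
    rw [List.pairwise_append]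
    refine ⟨hrep _, ?_, ?_⟩
    · simp [List.pairwise_cons]; linarith
    · intro a ha b hb
      have ha1 : a = 1 := List.eq_of_mem_replicate ha
      rcases List.mem_cons.mp hb with rfl | hb'
      · linarith [ha1 ▸ (le_of_lt hr2a)]
      · simp at hb'
        subst hb' ha1
        linarith
  have hLsorted : L.Pairwise (· ≤ ·) := by
    rw [hLdef]
    show List.Pairwise (· ≤ ·) (0 :: r1 :: (List.replicate (p+q-2) (1:ℝ) ++ [r2, r3]))
    rw [List.pairwise_cons, List.pairwise_cons]
    refine ⟨?_, ?_, htail⟩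
    · intro b hb
      rcases List.mem_cons.mp hb with rfl | hb'
      · linarith
      · rcases List.mem_append.mp hb' with h' | h'
        · rw [List.eq_of_mem_replicate h']; norm_num
        · rcases List.mem_cons.mp h' with rfl | h''
          · linarith
          · simp at h''; subst h''; linarith
    · intro b hb
      rcases List.mem_append.mp hb with h' | h'
      · rw [List.eq_of_mem_replicate h']; linarith
      · rcases List.mem_cons.mp h' with rfl | h''
        · linarith
        · simp at h''; subst h''; linarith
  have hsort : (signlessLaplacian (doubleStar p q)).charpoly.roots.sort (· ≤ ·) = L := by
    refine List.Perm.eq_of_pairwise' (Multiset.pairwise_sort _ _) hLsorted ?_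
    rw [← Multiset.coe_eq_coe, Multiset.sort_eq, hrootsall, hL]
  have hrev : (eigsDesc (signlessLaplacian (doubleStar p q))) = L.reverse := by
    rw [eigsDesc, hsort]
  have hget : γ₂ = r2 := by
    rw [hγ, hrev, hLdef]
    simp [List.reverse_append, List.getD]
  subst hget
  exact ⟨⟨hr2ge, hr2b⟩, hiff⟩
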